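/- The elliptic curve E_{t,s} : y^2 = x^3 + d(t^2-30t+1)x^2 - 8d^2 t(3t+1)(4t-7)x - 16d^3 t(4t^4-4t^3-40t^2+91t-4) over Q(s,t), where d = d_{t,s}, has j-invariant equal to (t^4 + 228 t^3 + 494 t^2 - 228 t + 1)^3 / (t (t^2 - 11 t - 1)^5). -/
import Mathlib


/-- The field `ℚ(s, t)` realized as `RatFunc (RatFunc ℚ)`,
with `s` the inner variable and `t` the outer variable. -/
noncomputable abbrev Kst : Type := RatFunc (RatFunc ℚ)

noncomputable def sv : Kst := RatFunc.C RatFunc.X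

noncomputable def tv : Kst := RatFunc.X

/-- `d = d_{t,s}`. -/
noncomputable def dv : Kst :=
  -4 * sv ^ 3 + (tv ^ 2 - 30 * tv + 1) * sv ^ 2 + 2 * tv * (3 * tv + 1) * (4 * tv - 7) * sv -
    tv * (4 * tv ^ 4 - 4 * tv ^ 3 - 40 * tv ^ 2 + 91 * tv - 4)

/-- The curve `E_{t,s} : y² = x³ + d(t²-30t+1)x² - 8d²t(3t+1)(4t-7)x
- 16d³t(4t⁴-4t³-40t²+91t-4)`. -/
noncomputable def Ets : WeierstrassCurve Kst :=
  { a₁ := 0, a₂ := dv * (tv ^ 2 - 30 * tv + 1), a₃ := 0,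
    a₄ := -8 * dv ^ 2 * tv * (3 * tv + 1) * (4 * tv - 7),
    a₆ := -16 * dv ^ 3 * tv * (4 * tv ^ 4 - 4 * tv ^ 3 - 40 * tv ^ 2 + 91 * tv - 4) }

/-- The j-invariant of `E_{t,s}` equals `(t⁴ + 228t³ + 494t² - 228t + 1)³ / (t(t² - 11t - 1)⁵)`. -/
theorem j_invariant_Ets [Ets.IsElliptic] :
    Ets.j = (tv ^ 4 + 228 * tv ^ 3 + 494 * tv ^ 2 - 228 * tv + 1) ^ 3 /
      (tv * (tv ^ 2 - 11 * tv - 1) ^ 5) := by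
  have ht : (tv : Kst) ≠ 0 := RatFunc.X_ne_zero
  have hQ : (tv ^ 2 - 11 * tv - 1 : Kst) ≠ 0 := by
    have hp : (Polynomial.X ^ 2 - 11 * Polynomial.X - 1 : Polynomial (RatFunc ℚ)) ≠ 0 := by
      intro h
      have h2 := congrArg (fun p => Polynomial.coeff p 2) h
      simp [Polynomial.coeff_X, Polynomial.coeff_one] at h2
    have := RatFunc.algebraMap_ne_zero hp
    simpa [tv, map_sub, map_mul, map_pow, map_ofNat, RatFunc.algebraMap_X] using this
  have hΔne : Ets.Δ ≠ 0 := Ets.isUnit_Δ.ne_zero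
  have hc : Ets.c₄ = 16 * dv ^ 2 *
      (tv ^ 4 + 228 * tv ^ 3 + 494 * tv ^ 2 - 228 * tv + 1) := by
    simp only [Ets, WeierstrassCurve.c₄, WeierstrassCurve.b₂, WeierstrassCurve.b₄]
    ring
  have hΔ : Ets.Δ = 4096 * dv ^ 6 * (tv * (tv ^ 2 - 11 * tv - 1) ^ 5) := by
    simp only [Ets, WeierstrassCurve.Δ, WeierstrassCurve.b₂, WeierstrassCurve.b₄,
      WeierstrassCurve.b₆, WeierstrassCurve.b₈]
    ring
  have hj : Ets.j = Ets.c₄ ^ 3 / Ets.Δ := by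
    rw [WeierstrassCurve.j, Units.val_inv_eq_inv_val, inv_mul_eq_div, Ets.coe_Δ']
  rw [hj, hc, hΔ, div_eq_div_iff (by rw [← hΔ]; exact hΔne)
    (mul_ne_zero ht (pow_ne_zero _ hQ))]
  ring
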